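/- For every nonnegative integer n, there exists exactly one finite subset T of {2,3,4,...} containing no two consecutive integers such that n is the sum of f_t over t in T (Zeckendorf's theorem). -/

import Mathlib

open List Nat

private lemma zeck_finset_list (T : Finset ℕ) (h2 : ∀ t ∈ T, 2 ≤ t)
    (hc : ∀ t ∈ T, t + 1 ∉ T) : (T.sort (· ≥ ·)).IsZeckendorfRep := by
  set l := T.sort (· ≥ ·) with hl
  have hsort : l.Pairwise (· > ·) := T.sortedGT_sort.pairwise
  have hmem : ∀ t, t ∈ l ↔ t ∈ T := fun t => Finset.mem_sort _
  rw [List.IsZeckendorfRep]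
  apply List.Pairwise.isChain
  rw [List.pairwise_append]
  refine ⟨?_, by simp, ?_⟩
  · refine hsort.imp_of_mem ?_
    intro a b ha hb hab
    rcases Nat.lt_or_ge (b + 1) a with h | h
    · omega
    · have : a = b + 1 := by omega
      exact absurd ((hmem a).1 ha) (this ▸ hc b ((hmem b).1 hb))
  · intro a ha b hb
    simp only [List.mem_singleton] at hb
    subst hb
    simpa using h2 a ((hmem a).1 ha)

theorem zeckendorf_theorem (n : ℕ) :
    ∃! T : Finset ℕ, (∀ t ∈ T, 2 ≤ t) ∧ (∀ t ∈ T, t + 1 ∉ T) ∧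
      n = ∑ t ∈ T, Nat.fib t := by
  have key : ∀ T : Finset ℕ, (∀ t ∈ T, 2 ≤ t) → (∀ t ∈ T, t + 1 ∉ T) →
      (∀ t, t ∈ T ↔ t ∈ (∑ t ∈ T, Nat.fib t).zeckendorf) := by
    intro T h2 hc t
    have hz := Nat.zeckendorf_sum_fib (zeck_finset_list T h2 hc)
    have hsum : ∑ t ∈ T, Nat.fib t = ((T.sort (· ≥ ·)).map Nat.fib).sum := by
      conv_lhs => rw [← Finset.sort_toFinset T (· ≥ ·)]
      exact List.sum_toFinset _ (T.sort_nodup _)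
    rw [hsum, hz, Finset.mem_sort]
  -- properties of the zeckendorf list of n
  have hrep := Nat.isZeckendorfRep_zeckendorf n
  have : IsTrans ℕ (fun a b => b + 2 ≤ a) := ⟨fun a b c hba hcb => by omega⟩
  have hpair : (n.zeckendorf ++ [0]).Pairwise (fun a b => b + 2 ≤ a) :=
    List.isChain_iff_pairwise.1 hrep
  rw [List.pairwise_append] at hpair
  obtain ⟨hp1, -, hp2⟩ := hpair
  have h2 : ∀ t ∈ n.zeckendorf, 2 ≤ t := by
    intro t ht
    simpa using hp2 t ht 0 (by simp)
  have hc : ∀ t ∈ n.zeckendorf, t + 1 ∉ n.zeckendorf := by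
    intro t ht ht1
    have hp1' : n.zeckendorf.Pairwise (fun a b => b + 2 ≤ a ∨ a + 2 ≤ b) :=
      hp1.imp (fun h => Or.inl h)
    have : Std.Symm (fun a b : ℕ => b + 2 ≤ a ∨ a + 2 ≤ b) := ⟨fun a b h => h.symm⟩
    rcases hp1'.forall ht ht1 (by omega) with h | h <;> omega
  have hnodup : n.zeckendorf.Nodup := hp1.imp (fun {a b} h => by omega)
  refine ⟨n.zeckendorf.toFinset, ⟨?_, ?_, ?_⟩, ?_⟩
  · intro t ht; exact h2 t (List.mem_toFinset.1 ht)
  · intro t ht ht1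
    exact hc t (List.mem_toFinset.1 ht) (List.mem_toFinset.1 ht1)
  · rw [List.sum_toFinset _ hnodup, Nat.sum_zeckendorf_fib]
  · rintro T ⟨hT2, hTc, rfl⟩
    ext t
    rw [List.mem_toFinset, key T hT2 hTc]
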